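/- Weighted subject expansion for system U: if Φ' derives Γ ⊢ t' : τ in system U and t →w t', then there is a derivation Φ of Γ ⊢ t : τ in system U with |Φ| > |Φ'|. -/

import Mathlib

/-! # The Bang Calculus Revisited: common definitions.

Terms are represented with de Bruijn indices, so that all the meta-level
substitutions are capture-avoiding by construction. -/

/-- Terms of the λ!-calculus.  `esub t u` is the explicit substitution
`t[0\u]`: the (anonymous) binder scopes over `t`, not over `u`. -/
inductive Tm : Type
  | var : ℕ → Tm
  | app : Tm → Tm → Tm
  | lam : Tm → Tm
  | bang : Tm → Tm
  | der : Tm → Tm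
  | esub : Tm → Tm → Tm
  deriving DecidableEq

namespace Tm

/-- lifting a renaming under a binder -/
def liftR (f : ℕ → ℕ) : ℕ → ℕ
  | 0 => 0
  | k + 1 => f k + 1

/-- renaming of free variables -/
def rename (f : ℕ → ℕ) : Tm → Tm
  | var k => var (f k)
  | app t u => app (rename f t) (rename f u)
  | lam t => lam (rename (liftR f) t)
  | bang t => bang (rename f t)
  | der t => der (rename f t)
  | esub t u => esub (rename (liftR f) t) (rename f u)

/-- lifting a simultaneous substitution under a binder -/
def liftS (σ : ℕ → Tm) : ℕ → Tm
  | 0 => var 0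
  | k + 1 => rename (· + 1) (σ k)

/-- simultaneous (capture-avoiding) substitution -/
def subst (σ : ℕ → Tm) : Tm → Tm
  | var k => σ k
  | app t u => app (subst σ t) (subst σ u)
  | lam t => lam (subst (liftS σ) t)
  | bang t => bang (subst σ t)
  | der t => der (subst σ t)
  | esub t u => esub (subst (liftS σ) t) (subst σ u)

/-- capture-avoiding substitution of `u` for the variable `0` of `t`,
where the result is placed under `n` extra binders (and `u` already lives
at that depth). -/
def substIn (n : ℕ) (u : Tm) (t : Tm) : Tm :=
  subst (fun k => match k with
    | 0 => u
    | k + 1 => var (k + n)) t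

/-- capture-avoiding meta-level substitution `t{0 := u}` -/
def subst0 (u : Tm) (t : Tm) : Tm := substIn 0 u t

/-- plugging a term into a list context `L ::= ◻ | L[x\t]`; the head of the
list is the argument of the outermost explicit substitution. -/
def plug : List Tm → Tm → Tm
  | [], s => s
  | e :: L, s => esub (plug L s) e

/-- the w-size of a term -/
def wsize : Tm → ℕ
  | var _ => 0
  | app t u => 1 + wsize t + wsize u
  | lam t => 1 + wsize t
  | bang _ => 0
  | der t => 1 + wsize t
  | esub t u => 1 + wsize t + wsize u

end Tm

/-- the names of the three rewriting rules of the λ!-calculus -/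
inductive Rule : Type
  | dB | sb | db
  deriving DecidableEq

open Tm in
/-- the three rewriting rules, applied at the root (at a distance) -/
inductive Root : Rule → Tm → Tm → Prop
  | dB (L : List Tm) (t u : Tm) :
      Root .dB (app (plug L (lam t)) u)
               (plug L (esub t (rename (· + L.length) u)))
  | sb (L : List Tm) (t u : Tm) :
      Root .sb (esub t (plug L (bang u))) (plug L (substIn L.length u t))
  | db (L : List Tm) (t : Tm) :
      Root .db (der (plug L (bang t))) (plug L t)

/-- closure of each rule under weak contexts (no reduction under `bang`) -/
inductive Step : Rule → Tm → Tm → Prop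
  | root {r : Rule} {t t' : Tm} : Root r t t' → Step r t t'
  | appL {r t t'} (u : Tm) : Step r t t' → Step r (Tm.app t u) (Tm.app t' u)
  | appR {r u u'} (t : Tm) : Step r u u' → Step r (Tm.app t u) (Tm.app t u')
  | lam {r t t'} : Step r t t' → Step r (Tm.lam t) (Tm.lam t')
  | der {r t t'} : Step r t t' → Step r (Tm.der t) (Tm.der t')
  | esubL {r t t'} (u : Tm) : Step r t t' → Step r (Tm.esub t u) (Tm.esub t' u)
  | esubR {r u u'} (t : Tm) : Step r u u' → Step r (Tm.esub t u) (Tm.esub t u')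

/-- the weak reduction `→w` of the λ!-calculus -/
def StepW (t t' : Tm) : Prop := ∃ r, Step r t t'

/-- counted weak reduction: `RedCnt t (b, e) u` holds iff `t →w* u` using `b`
dB-steps and `e` steps of kind s!/d!. -/
inductive RedCnt : Tm → ℕ × ℕ → Tm → Prop
  | refl (t : Tm) : RedCnt t (0, 0) t
  | db {t t₁ u : Tm} {b e : ℕ} :
      Step .dB t t₁ → RedCnt t₁ (b, e) u → RedCnt t (b + 1, e) u
  | ex {t t₁ u : Tm} {b e : ℕ} :
      (Step .sb t t₁ ∨ Step .db t t₁) → RedCnt t₁ (b, e) u →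
      RedCnt t (b, e + 1) u

mutual
  /-- neutral w-normal terms -/
  inductive NeW : Tm → Prop
    | var (k : ℕ) : NeW (Tm.var k)
    | app {t u : Tm} : NaW t → NoW u → NeW (Tm.app t u)
    | der {t : Tm} : NbW t → NeW (Tm.der t)
    | esub {t u : Tm} : NeW t → NbW u → NeW (Tm.esub t u)
  /-- neutral-abs w-normal terms -/
  inductive NaW : Tm → Prop
    | bang (t : Tm) : NaW (Tm.bang t)
    | ne {t : Tm} : NeW t → NaW t
    | esub {t u : Tm} : NaW t → NbW u → NaW (Tm.esub t u)
  /-- neutral-bang w-normal terms -/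
  inductive NbW : Tm → Prop
    | ne {t : Tm} : NeW t → NbW t
    | lam {t : Tm} : NoW t → NbW (Tm.lam t)
    | esub {t u : Tm} : NbW t → NbW u → NbW (Tm.esub t u)
  /-- w-normal terms -/
  inductive NoW : Tm → Prop
    | na {t : Tm} : NaW t → NoW t
    | nb {t : Tm} : NbW t → NoW t
end

/-- clashes -/
inductive Clash : Tm → Prop
  | appBang (L : List Tm) (t u : Tm) : Clash (Tm.app (Tm.plug L (Tm.bang t)) u)
  | esubLam (L : List Tm) (t u : Tm) : Clash (Tm.esub t (Tm.plug L (Tm.lam u)))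
  | derLam (L : List Tm) (u : Tm) : Clash (Tm.der (Tm.plug L (Tm.lam u)))
  | appLam (L : List Tm) (t u : Tm) : Clash (Tm.app t (Tm.plug L (Tm.lam u)))

/-- `WSub t s` holds iff `t = W⟨s⟩` for some weak context `W` -/
inductive WSub : Tm → Tm → Prop
  | refl (t : Tm) : WSub t t
  | appL {t s : Tm} (u : Tm) : WSub t s → WSub (Tm.app t u) s
  | appR {u s : Tm} (t : Tm) : WSub u s → WSub (Tm.app t u) s
  | lam {t s : Tm} : WSub t s → WSub (Tm.lam t) s
  | der {t s : Tm} : WSub t s → WSub (Tm.der t) s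
  | esubL {t s : Tm} (u : Tm) : WSub t s → WSub (Tm.esub t u) s
  | esubR {u s : Tm} (t : Tm) : WSub u s → WSub (Tm.esub t u) s

/-- weak clash freeness -/
def Wcf (t : Tm) : Prop := ¬ ∃ s, WSub t s ∧ Clash s

mutual
  /-- neutral weak clash free normal terms -/
  inductive NeCF : Tm → Prop
    | var (k : ℕ) : NeCF (Tm.var k)
    | app {t u : Tm} : NeCF t → NaCF u → NeCF (Tm.app t u)
    | der {t : Tm} : NeCF t → NeCF (Tm.der t)
    | esub {t u : Tm} : NeCF t → NeCF u → NeCF (Tm.esub t u)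
  /-- neutral-abs weak clash free normal terms -/
  inductive NaCF : Tm → Prop
    | bang (t : Tm) : NaCF (Tm.bang t)
    | ne {t : Tm} : NeCF t → NaCF t
    | esub {t u : Tm} : NaCF t → NeCF u → NaCF (Tm.esub t u)
  /-- neutral-bang weak clash free normal terms -/
  inductive NbCF : Tm → Prop
    | ne {t : Tm} : NeCF t → NbCF t
    | lam {t : Tm} : NoCF t → NbCF (Tm.lam t)
    | esub {t u : Tm} : NbCF t → NeCF u → NbCF (Tm.esub t u)
  /-- weak clash free normal terms -/
  inductive NoCF : Tm → Prop
    | na {t : Tm} : NaCF t → NoCF t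
    | nb {t : Tm} : NbCF t → NoCF t
end

/-- Types of system 𝒰: base types, multiset types and arrow types.  A
multiset type is given by a list of types (a representative of the multiset
it determines). -/
inductive Ty : Type
  | base : ℕ → Ty
  | mult : List Ty → Ty
  | arr : List Ty → Ty → Ty

/-- typing contexts: functions from (de Bruijn) variables to multiset types -/
abbrev Ctx := ℕ → Multiset Ty

/-- the context mapping `k` to `M` and anything else to the empty multiset -/
def Ctx.single (k : ℕ) (M : Multiset Ty) : Ctx := fun j => if j = k then M else 0

/-- removing the (type of the) bound variable `0` from a context -/
def Ctx.tail (Γ : Ctx) : Ctx := fun k => Γ (k + 1)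

/-- extending a context with a multiset type for a fresh variable `0` -/
def Ctx.cons (M : Multiset Ty) (Γ : Ctx) : Ctx := fun k =>
  match k with
  | 0 => M
  | k + 1 => Γ k

/-- Sized typing of system 𝒰: `DerU Γ t τ n` means that there is a derivation
of `Γ ⊢ t : τ` whose size (number of rules, not counting `bg`) is `n`. -/
inductive DerU : Ctx → Tm → Ty → ℕ → Prop
  | ax (k : ℕ) (σ : Ty) : DerU (Ctx.single k {σ}) (Tm.var k) σ 1
  | app {Γ Δ : Ctx} {t u : Tm} {M : List Ty} {τ : Ty} {n m : ℕ} :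
      DerU Γ t (Ty.arr M τ) n → DerU Δ u (Ty.mult M) m →
      DerU (Γ + Δ) (Tm.app t u) τ (n + m + 1)
  | abs {Γ : Ctx} {t : Tm} {τ : Ty} {n : ℕ} (M : List Ty) :
      DerU Γ t τ n → Multiset.ofList M = Γ 0 →
      DerU (Ctx.tail Γ) (Tm.lam t) (Ty.arr M τ) (n + 1)
  | es {Γ Δ : Ctx} {t u : Tm} {σ : Ty} {M : List Ty} {n m : ℕ} :
      DerU Γ t σ n → DerU Δ u (Ty.mult M) m → Multiset.ofList M = Γ 0 →
      DerU (Ctx.tail Γ + Δ) (Tm.esub t u) σ (n + m + 1)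
  | bg {t : Tm} (prs : List (Ctx × Ty × ℕ)) :
      (∀ p ∈ prs, DerU p.1 t p.2.1 p.2.2) →
      DerU ((prs.map (·.1)).sum) (Tm.bang t)
           (Ty.mult (prs.map (·.2.1))) ((prs.map (·.2.2)).sum)
  | dr {Γ : Ctx} {t : Tm} {σ : Ty} {n : ℕ} :
      DerU Γ t (Ty.mult [σ]) n → DerU Γ (Tm.der t) σ (n + 1)

/-! ## The source λ-calculus with explicit substitutions (CBN / CBV) -/

/-- terms of the λ-calculus with explicit substitutions (de Bruijn) -/
inductive Lm : Type
  | var : ℕ → Lm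
  | app : Lm → Lm → Lm
  | lam : Lm → Lm
  | esub : Lm → Lm → Lm
  deriving DecidableEq

namespace Lm

def liftR (f : ℕ → ℕ) : ℕ → ℕ
  | 0 => 0
  | k + 1 => f k + 1

def rename (f : ℕ → ℕ) : Lm → Lm
  | var k => var (f k)
  | app t u => app (rename f t) (rename f u)
  | lam t => lam (rename (liftR f) t)
  | esub t u => esub (rename (liftR f) t) (rename f u)

def liftS (σ : ℕ → Lm) : ℕ → Lm
  | 0 => var 0
  | k + 1 => rename (· + 1) (σ k)

def subst (σ : ℕ → Lm) : Lm → Lm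
  | var k => σ k
  | app t u => app (subst σ t) (subst σ u)
  | lam t => lam (subst (liftS σ) t)
  | esub t u => esub (subst (liftS σ) t) (subst σ u)

def substIn (n : ℕ) (u : Lm) (t : Lm) : Lm :=
  subst (fun k => match k with
    | 0 => u
    | k + 1 => var (k + n)) t

/-- capture-avoiding meta-level substitution `t{0 := u}` -/
def subst0 (u : Lm) (t : Lm) : Lm := substIn 0 u t

def plug : List Lm → Lm → Lm
  | [], s => s
  | e :: L, s => esub (plug L s) e

/-- values -/
def IsVal : Lm → Prop
  | var _ => True
  | lam _ => True
  | _ => False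

/-- the n-size of a term -/
def nsize : Lm → ℕ
  | var _ => 0
  | lam t => 1 + nsize t
  | app t _ => 1 + nsize t
  | esub t _ => 1 + nsize t

/-- the v-size of a term -/
def vsize : Lm → ℕ
  | var _ => 0
  | lam _ => 0
  | app t u => 1 + vsize t + vsize u
  | esub t u => 1 + vsize t + vsize u

end Lm

/-- names of the CBN rules -/
inductive NRule : Type
  | dB | s
  deriving DecidableEq

/-- call-by-name reduction (closure of dB and s under CBN contexts) -/
inductive StepN : NRule → Lm → Lm → Prop
  | dB (L : List Lm) (t u : Lm) :
      StepN .dB (Lm.app (Lm.plug L (Lm.lam t)) u)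
                (Lm.plug L (Lm.esub t (Lm.rename (· + L.length) u)))
  | s (t u : Lm) : StepN .s (Lm.esub t u) (Lm.subst0 u t)
  | appL {r t t'} (u : Lm) : StepN r t t' → StepN r (Lm.app t u) (Lm.app t' u)
  | lam {r t t'} : StepN r t t' → StepN r (Lm.lam t) (Lm.lam t')
  | esubL {r t t'} (u : Lm) : StepN r t t' → StepN r (Lm.esub t u) (Lm.esub t' u)

/-- names of the CBV rules -/
inductive VRule : Type
  | dB | sv
  deriving DecidableEq

/-- call-by-value reduction (closure of dB and sv under CBV contexts) -/
inductive StepV : VRule → Lm → Lm → Prop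
  | dB (L : List Lm) (t u : Lm) :
      StepV .dB (Lm.app (Lm.plug L (Lm.lam t)) u)
                (Lm.plug L (Lm.esub t (Lm.rename (· + L.length) u)))
  | sv (L : List Lm) (t v : Lm) (hv : Lm.IsVal v) :
      StepV .sv (Lm.esub t (Lm.plug L v)) (Lm.plug L (Lm.substIn L.length v t))
  | appL {r t t'} (u : Lm) : StepV r t t' → StepV r (Lm.app t u) (Lm.app t' u)
  | appR {r u u'} (t : Lm) : StepV r u u' → StepV r (Lm.app t u) (Lm.app t u')
  | esubL {r t t'} (u : Lm) : StepV r t t' → StepV r (Lm.esub t u) (Lm.esub t' u)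
  | esubR {r u u'} (t : Lm) : StepV r u u' → StepV r (Lm.esub t u) (Lm.esub t u')

mutual
  /-- CBN neutral terms -/
  inductive NeN : Lm → Prop
    | var (k : ℕ) : NeN (Lm.var k)
    | app {t : Lm} (u : Lm) : NeN t → NeN (Lm.app t u)
  /-- CBN normal terms -/
  inductive NoN : Lm → Prop
    | lam {t : Lm} : NoN t → NoN (Lm.lam t)
    | ne {t : Lm} : NeN t → NoN t
end

mutual
  /-- CBV (substituted) variables -/
  inductive VrV : Lm → Prop
    | var (k : ℕ) : VrV (Lm.var k)
    | esub {t u : Lm} : VrV t → NeV u → VrV (Lm.esub t u)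
  /-- CBV neutral terms -/
  inductive NeV : Lm → Prop
    | app₁ {t u : Lm} : VrV t → NoV u → NeV (Lm.app t u)
    | app₂ {t u : Lm} : NeV t → NoV u → NeV (Lm.app t u)
    | esub {t u : Lm} : NeV t → NeV u → NeV (Lm.esub t u)
  /-- CBV normal terms -/
  inductive NoV : Lm → Prop
    | lam (t : Lm) : NoV (Lm.lam t)
    | vr {t : Lm} : VrV t → NoV t
    | ne {t : Lm} : NeV t → NoV t
    | esub {t u : Lm} : NoV t → NeV u → NoV (Lm.esub t u)
end

/-- counted CBN reduction, recording the number of dB- and s-steps -/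
inductive RedCntN : Lm → ℕ × ℕ → Lm → Prop
  | refl (t : Lm) : RedCntN t (0, 0) t
  | db {t t₁ u : Lm} {b e : ℕ} :
      StepN .dB t t₁ → RedCntN t₁ (b, e) u → RedCntN t (b + 1, e) u
  | s {t t₁ u : Lm} {b e : ℕ} :
      StepN .s t t₁ → RedCntN t₁ (b, e) u → RedCntN t (b, e + 1) u

/-- counted CBV reduction, recording the number of dB- and sv-steps -/
inductive RedCntV : Lm → ℕ × ℕ → Lm → Prop
  | refl (t : Lm) : RedCntV t (0, 0) t
  | db {t t₁ u : Lm} {b e : ℕ} :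
      StepV .dB t t₁ → RedCntV t₁ (b, e) u → RedCntV t (b + 1, e) u
  | sv {t t₁ u : Lm} {b e : ℕ} :
      StepV .sv t t₁ → RedCntV t₁ (b, e) u → RedCntV t (b, e + 1) u

/-- the CBN embedding into the λ!-calculus -/
def cbn : Lm → Tm
  | .var k => .var k
  | .lam t => .lam (cbn t)
  | .app t u => .app (cbn t) (.bang (cbn u))
  | .esub t u => .esub (cbn t) (.bang (cbn u))

/-- `deBang t = some s'` iff `t = L⟨!s⟩` and `s' = L⟨s⟩` -/
def deBang : Tm → Option Tm
  | .bang s => some s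
  | .esub t e => (deBang t).map (fun s => Tm.esub s e)
  | _ => none

/-- the CBV embedding into the λ!-calculus -/
def cbv : Lm → Tm
  | .var k => .bang (.var k)
  | .lam t => .bang (.lam (cbv t))
  | .app t u =>
      match deBang (cbv t) with
      | some r => Tm.app r (cbv u)
      | none => Tm.app (.der (cbv t)) (cbv u)
  | .esub t u => .esub (cbv t) (cbv u)

/-- Sized typing of system 𝒩 (call-by-name): `DerN Γ t τ n` means that there
is a derivation of `Γ ⊢ t : τ` of size `n` (counting all rules). -/
inductive DerN : Ctx → Lm → Ty → ℕ → Prop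
  | ax (k : ℕ) (σ : Ty) : DerN (Ctx.single k {σ}) (Lm.var k) σ 1
  | app {Γ : Ctx} {t u : Lm} {τ : Ty} {n : ℕ} (prs : List (Ctx × Ty × ℕ)) :
      DerN Γ t (Ty.arr (prs.map (·.2.1)) τ) n →
      (∀ p ∈ prs, DerN p.1 u p.2.1 p.2.2) →
      DerN (Γ + (prs.map (·.1)).sum) (Lm.app t u) τ
           (n + (prs.map (·.2.2)).sum + 1)
  | abs {Γ : Ctx} {t : Lm} {τ : Ty} {n : ℕ} (M : List Ty) :
      DerN Γ t τ n → Multiset.ofList M = Γ 0 →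
      DerN (Ctx.tail Γ) (Lm.lam t) (Ty.arr M τ) (n + 1)
  | es {Γ : Ctx} {t u : Lm} {τ : Ty} {n : ℕ} (prs : List (Ctx × Ty × ℕ)) :
      DerN Γ t τ n →
      Multiset.ofList (prs.map (·.2.1)) = Γ 0 →
      (∀ p ∈ prs, DerN p.1 u p.2.1 p.2.2) →
      DerN (Ctx.tail Γ + (prs.map (·.1)).sum) (Lm.esub t u) τ
           (n + (prs.map (·.2.2)).sum + 1)

/-- Sized typing of system 𝒱 (call-by-value): `DerV Γ t τ n` means that there
is a derivation of `Γ ⊢ t : τ` of size `n` (each rule counts 1, except that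
`ax` counts the cardinal of its multiset and `abs` contributes the sizes of
its premises plus the number of premises). -/
inductive DerV : Ctx → Lm → Ty → ℕ → Prop
  | ax (k : ℕ) (M : List Ty) :
      DerV (Ctx.single k (Multiset.ofList M)) (Lm.var k) (Ty.mult M) M.length
  | es {Γ Δ : Ctx} {t u : Lm} {σ : Ty} {M : List Ty} {n m : ℕ} :
      DerV Γ t σ n → DerV Δ u (Ty.mult M) m → Multiset.ofList M = Γ 0 →
      DerV (Ctx.tail Γ + Δ) (Lm.esub t u) σ (n + m + 1)
  | abs {t : Lm} (prs : List (Ctx × List Ty × Ty × ℕ)) :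
      (∀ p ∈ prs, DerV p.1 t p.2.2.1 p.2.2.2) →
      (∀ p ∈ prs, Multiset.ofList p.2.1 = p.1 0) →
      DerV ((prs.map (fun p => Ctx.tail p.1)).sum) (Lm.lam t)
           (Ty.mult (prs.map (fun p => Ty.arr p.2.1 p.2.2.1)))
           ((prs.map (·.2.2.2)).sum + prs.length)
  | app {Γ Δ : Ctx} {t u : Lm} {M : List Ty} {τ : Ty} {n m : ℕ} :
      DerV Γ t (Ty.mult [Ty.arr M τ]) n → DerV Δ u (Ty.mult M) m →
      DerV (Γ + Δ) (Lm.app t u) τ (n + m + 1)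

/-! ## Auxiliary machinery for subject expansion -/

section Aux

theorem Tm.liftR_ext {f g : ℕ → ℕ} (h : ∀ k, f k = g k) : ∀ k, Tm.liftR f k = Tm.liftR g k
  | 0 => rfl
  | k+1 => by simp [Tm.liftR, h]

theorem Tm.rename_ext : ∀ (t : Tm) {f g : ℕ → ℕ}, (∀ k, f k = g k) →
    Tm.rename f t = Tm.rename g t
  | .var k, _, _, h => by simp [Tm.rename, h]
  | .app t u, _, _, h => by simp [Tm.rename, Tm.rename_ext t h, Tm.rename_ext u h]
  | .lam t, _, _, h => by simp [Tm.rename, Tm.rename_ext t (Tm.liftR_ext h)]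
  | .bang t, _, _, h => by simp [Tm.rename, Tm.rename_ext t h]
  | .der t, _, _, h => by simp [Tm.rename, Tm.rename_ext t h]
  | .esub t u, _, _, h => by
      simp [Tm.rename, Tm.rename_ext t (Tm.liftR_ext h), Tm.rename_ext u h]

theorem Tm.liftR_id {f : ℕ → ℕ} (h : ∀ k, f k = k) : ∀ k, Tm.liftR f k = k
  | 0 => rfl
  | k+1 => by simp [Tm.liftR, h]

theorem Tm.rename_id' : ∀ (t : Tm) {f : ℕ → ℕ}, (∀ k, f k = k) → Tm.rename f t = t
  | .var k, _, h => by simp [Tm.rename, h]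
  | .app t u, _, h => by simp [Tm.rename, Tm.rename_id' t h, Tm.rename_id' u h]
  | .lam t, _, h => by simp [Tm.rename, Tm.rename_id' t (Tm.liftR_id h)]
  | .bang t, _, h => by simp [Tm.rename, Tm.rename_id' t h]
  | .der t, _, h => by simp [Tm.rename, Tm.rename_id' t h]
  | .esub t u, _, h => by
      simp [Tm.rename, Tm.rename_id' t (Tm.liftR_id h), Tm.rename_id' u h]

theorem Tm.rename_comp : ∀ (t : Tm) (f g : ℕ → ℕ),
    Tm.rename f (Tm.rename g t) = Tm.rename (fun k => f (g k)) t
  | .var k, _, _ => rfl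
  | .app t u, f, g => by simp [Tm.rename, Tm.rename_comp t, Tm.rename_comp u]
  | .lam t, f, g => by
      simp only [Tm.rename, Tm.rename_comp t]
      rw [Tm.rename_ext t (g := Tm.liftR fun k => f (g k))
        (fun k => by cases k <;> simp [Tm.liftR])]
  | .bang t, f, g => by simp [Tm.rename, Tm.rename_comp t]
  | .der t, f, g => by simp [Tm.rename, Tm.rename_comp t]
  | .esub t u, f, g => by
      simp only [Tm.rename, Tm.rename_comp t, Tm.rename_comp u]
      rw [Tm.rename_ext t (g := Tm.liftR fun k => f (g k))
        (fun k => by cases k <;> simp [Tm.liftR])]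

theorem Tm.liftS_ext {σ σ' : ℕ → Tm} (h : ∀ k, σ k = σ' k) :
    ∀ k, Tm.liftS σ k = Tm.liftS σ' k
  | 0 => rfl
  | k+1 => by simp [Tm.liftS, h]

theorem Tm.subst_ext : ∀ (t : Tm) {σ σ' : ℕ → Tm}, (∀ k, σ k = σ' k) →
    Tm.subst σ t = Tm.subst σ' t
  | .var k, _, _, h => by simp [Tm.subst, h]
  | .app t u, _, _, h => by simp [Tm.subst, Tm.subst_ext t h, Tm.subst_ext u h]
  | .lam t, _, _, h => by simp [Tm.subst, Tm.subst_ext t (Tm.liftS_ext h)]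
  | .bang t, _, _, h => by simp [Tm.subst, Tm.subst_ext t h]
  | .der t, _, _, h => by simp [Tm.subst, Tm.subst_ext t h]
  | .esub t u, _, _, h => by
      simp [Tm.subst, Tm.subst_ext t (Tm.liftS_ext h), Tm.subst_ext u h]

/-- the substitution replacing variable `i` by `u` (renamed to depth `i`),
leaving variables below `i` alone and sending `i+1+k` to `i+k+n`. -/
def gmap (i n : ℕ) (u : Tm) : ℕ → Tm := fun k =>
  if k < i then .var k else if k = i then Tm.rename (· + i) u else .var (k - 1 + n)

theorem liftS_gmap (i n : ℕ) (u : Tm) : ∀ k, Tm.liftS (gmap i n u) k = gmap (i+1) n u k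
  | 0 => by simp [Tm.liftS, gmap]
  | k+1 => by
      simp only [Tm.liftS, gmap]
      rcases lt_trichotomy k i with h | rfl | h
      · rw [if_pos h, if_pos (by omega)]; rfl
      · rw [if_neg (lt_irrefl k), if_pos rfl, if_neg (by omega), if_pos rfl,
          Tm.rename_comp]
        exact Tm.rename_ext u (fun j => by omega)
      · rw [if_neg (by omega), if_neg (by omega), if_neg (by omega), if_neg (by omega)]
        simp [Tm.rename]; omega

theorem substIn_gmap (n : ℕ) (u t : Tm) : Tm.substIn n u t = Tm.subst (gmap 0 n u) t := by
  apply Tm.subst_ext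
  intro k
  match k with
  | 0 => exact (Tm.rename_id' u (fun _ => rfl)).symm
  | k+1 => simp [gmap, Tm.substIn]

/-! ### context combinators -/

/-- shift a context up by `i` (used for terms placed under `i` binders) -/
def shiftUp (i : ℕ) (Δ : Ctx) : Ctx := fun j => if i ≤ j then Δ (j - i) else 0

/-- the context of `subst (gmap i n u) t` contributed by the context of `t` -/
def padCtx (i n : ℕ) (Γ : Ctx) : Ctx := fun j =>
  if j < i then Γ j else if i + n ≤ j then Γ (j + 1 - n) else 0

theorem shiftUp_zero (Δ : Ctx) : shiftUp 0 Δ = Δ := funext fun j => by simp [shiftUp]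

theorem shiftUp_succ_zero (i : ℕ) (Δ : Ctx) : shiftUp (i+1) Δ 0 = 0 := by simp [shiftUp]

theorem tail_add (Γ Δ : Ctx) : Ctx.tail (Γ + Δ) = Ctx.tail Γ + Ctx.tail Δ := rfl

theorem tail_shiftUp (i : ℕ) (Δ : Ctx) : Ctx.tail (shiftUp (i+1) Δ) = shiftUp i Δ := by
  funext j
  simp only [Ctx.tail, shiftUp]
  split_ifs <;> first | rfl | (congr 1; omega) | omega

theorem tail_padCtx (i n : ℕ) (Γ : Ctx) :
    Ctx.tail (padCtx (i+1) n Γ) = padCtx i n (Ctx.tail Γ) := by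
  funext j
  simp only [Ctx.tail, padCtx]
  split_ifs <;> first | rfl | (congr 1; omega) | omega

theorem tail_padCtx0 (n : ℕ) (Γ : Ctx) :
    Ctx.tail (padCtx 0 (n+1) Γ) = padCtx 0 n Γ := by
  funext j
  simp only [Ctx.tail, padCtx]
  split_ifs <;> first | rfl | (congr 1; omega) | omega

theorem padCtx_zero (i n : ℕ) : padCtx i n 0 = 0 := by
  funext j; simp only [padCtx]; split_ifs <;> rfl

theorem padCtx_add (i n : ℕ) (Γ Γ' : Ctx) :
    padCtx i n (Γ + Γ') = padCtx i n Γ + padCtx i n Γ' := by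
  funext j; simp only [padCtx, Pi.add_apply]; split_ifs <;> simp

theorem padCtx_apply_zero (i n : ℕ) (Γ : Ctx) (h : 0 < i) : padCtx i n Γ 0 = Γ 0 := by
  simp [padCtx, h]

theorem padCtx0_apply_zero (n : ℕ) (Γ : Ctx) (h : 0 < n) : padCtx 0 n Γ 0 = 0 := by
  simp only [padCtx]; split_ifs <;> first | rfl | omega

theorem padCtx_zero_zero (Γ : Ctx) : padCtx 0 0 Γ = Ctx.tail Γ := by
  funext j; simp [padCtx, Ctx.tail]

theorem sum_map_apply {α : Type} (l : List α) (g : α → Ctx) (j : ℕ) :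
    (l.map g).sum j = (l.map (fun x => g x j)).sum := by
  induction l with
  | nil => rfl
  | cons a l ih => simp [List.sum_cons, Pi.add_apply, ih]

theorem tail_sum_map {α : Type} (l : List α) (g : α → Ctx) :
    Ctx.tail (l.map g).sum = (l.map (fun x => Ctx.tail (g x))).sum := by
  induction l with
  | nil => rfl
  | cons a l ih => simp only [List.map_cons, List.sum_cons, tail_add, ih]

end Aux
section AntiRename

theorem liftR_inj {f : ℕ → ℕ} (hf : Function.Injective f) :
    Function.Injective (Tm.liftR f) := by
  intro a b h
  match a, b with
  | 0, 0 => rfl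
  | 0, b+1 => simp [Tm.liftR] at h
  | a+1, 0 => simp [Tm.liftR] at h
  | a+1, b+1 =>
    simp only [Tm.liftR] at h
    have : f a = f b := by omega
    rw [hf this]

theorem antiRename (t : Tm) : ∀ {f : ℕ → ℕ} {Δ : Ctx} {τ : Ty} {m : ℕ},
    Function.Injective f → DerU Δ (Tm.rename f t) τ m →
    DerU (fun k => Δ (f k)) t τ m ∧ ∀ j, (∀ k, f k ≠ j) → Δ j = 0 := by
  induction t with
  | var k =>
    intro f Δ τ m hf h
    simp only [Tm.rename] at h
    cases h with
    | ax =>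
      constructor
      · have : (fun j => Ctx.single (f k) {τ} (f j)) = Ctx.single k {τ} := by
          funext j
          simp only [Ctx.single]
          by_cases hj : j = k
          · subst hj; simp
          · rw [if_neg (fun hc => hj (hf hc)), if_neg hj]
        rw [this]; exact DerU.ax k τ
      · intro j hj
        simp only [Ctx.single]
        rw [if_neg (fun hc => hj k hc.symm)]
  | app t u iht ihu =>
    intro f Δ τ m hf h
    simp only [Tm.rename] at h
    cases h with
    | app h1 h2 =>
      obtain ⟨d1, v1⟩ := iht hf h1
      obtain ⟨d2, v2⟩ := ihu hf h2
      exact ⟨DerU.app d1 d2, fun j hj => by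
        simp only [Pi.add_apply, v1 j hj, v2 j hj, add_zero]⟩
  | lam t iht =>
    intro f Δ τ m hf h
    simp only [Tm.rename] at h
    cases h with
    | abs M hd hM =>
      obtain ⟨d1, v1⟩ := iht (liftR_inj hf) hd
      constructor
      · exact DerU.abs M d1 hM
      · intro j hj
        exact v1 (j+1) (fun k => by
          cases k with
          | zero => simp [Tm.liftR]
          | succ k => simp only [Tm.liftR]; exact fun hc => hj k (by omega))
  | bang t iht =>
    intro f Δ τ m hf h
    simp only [Tm.rename] at h
    cases h with
    | bg prs hall =>
      constructor
      · have hb := DerU.bg (t := t) (prs.map (fun p => ((fun k => p.1 (f k)), p.2)))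
          (fun p hp => by
            obtain ⟨q, hq, rfl⟩ := List.mem_map.mp hp
            exact (iht hf (hall q hq)).1)
        simp only [List.map_map, Function.comp_def] at hb
        have hc : (List.map (fun (p : Ctx × Ty × ℕ) => (fun k => p.1 (f k))) prs).sum
            = fun k => (List.map (fun (p : Ctx × Ty × ℕ) => p.1) prs).sum (f k) := by
          funext k
          rw [sum_map_apply, sum_map_apply]
        rw [hc] at hb
        exact hb
      · intro j hj
        rw [sum_map_apply]
        apply List.sum_eq_zero
        intro x hx
        simp only [List.mem_map] at hx
        obtain ⟨p, hp, rfl⟩ := hx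
        exact (iht hf (hall p hp)).2 j hj
  | der t iht =>
    intro f Δ τ m hf h
    simp only [Tm.rename] at h
    cases h with
    | dr hd =>
      obtain ⟨d1, v1⟩ := iht hf hd
      exact ⟨DerU.dr d1, v1⟩
  | esub t u iht ihu =>
    intro f Δ τ m hf h
    simp only [Tm.rename] at h
    cases h with
    | es h1 h2 hM =>
      obtain ⟨d1, v1⟩ := iht (liftR_inj hf) h1
      obtain ⟨d2, v2⟩ := ihu hf h2
      constructor
      · exact DerU.es d1 d2 hM
      · intro j hj
        have e1 : _ = (0 : Multiset Ty) := v1 (j+1) (fun k => by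
          cases k with
          | zero => simp [Tm.liftR]
          | succ k => simp only [Tm.liftR]; exact fun hc => hj k (by omega))
        simp only [Pi.add_apply, Ctx.tail, e1, v2 j hj, add_zero, zero_add]

end AntiRename
section AntiSubst

theorem addRight_inj (n : ℕ) : Function.Injective (· + n) := fun a b h => Nat.add_right_cancel h

theorem padCtx_single_lt {k i : ℕ} (n : ℕ) (τ : Ty) (hk : k < i) :
    padCtx i n (Ctx.single k {τ}) = Ctx.single k {τ} := by
  funext j; simp only [padCtx, Ctx.single]
  split_ifs <;> first | rfl | (exfalso; omega)

theorem padCtx_single_gt {k i : ℕ} (n : ℕ) (τ : Ty) (hk : i < k) :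
    padCtx i n (Ctx.single k {τ}) = Ctx.single (k - 1 + n) {τ} := by
  funext j; simp only [padCtx, Ctx.single]
  split_ifs <;> first | rfl | (exfalso; omega)

theorem padCtx_single_eq (i n : ℕ) (M : Multiset Ty) :
    padCtx i n (Ctx.single i M) = 0 := by
  funext j; simp only [padCtx, Ctx.single]
  split_ifs <;> first | rfl | (exfalso; omega)

theorem shiftUp_recomp {i : ℕ} {Δ : Ctx} (hv : ∀ j < i, Δ j = 0) :
    shiftUp i (fun k => Δ (k + i)) = Δ := by
  funext j; simp only [shiftUp]
  by_cases hj : i ≤ j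
  · rw [if_pos hj]; congr 1; omega
  · rw [if_neg hj, (hv j (by omega)).symm]

theorem sum_shiftUp_succ_zero (i : ℕ) (prs : List (Ctx × Ty × ℕ)) :
    (prs.map (fun p => shiftUp (i+1) p.1)).sum 0 = 0 := by
  rw [sum_map_apply]
  apply List.sum_eq_zero
  intro x hx
  obtain ⟨p, hp, rfl⟩ := List.mem_map.mp hx
  exact shiftUp_succ_zero i p.1

theorem tail_sum_shiftUp (i : ℕ) (prs : List (Ctx × Ty × ℕ)) :
    Ctx.tail ((prs.map (fun p => shiftUp (i+1) p.1)).sum)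
      = (prs.map (fun p => shiftUp i p.1)).sum := by
  rw [tail_sum_map]
  congr 1
  exact List.map_congr_left (fun p _ => tail_shiftUp i p.1)

theorem antiSubst : ∀ (t : Tm) {i n : ℕ} {u : Tm} {Δ : Ctx} {τ : Ty} {m : ℕ},
    DerU Δ (Tm.subst (gmap i n u) t) τ m →
    ∃ (Γ : Ctx) (prs : List (Ctx × Ty × ℕ)) (a : ℕ),
      DerU Γ t τ a ∧
      (∀ p ∈ prs, DerU p.1 u p.2.1 p.2.2) ∧
      Multiset.ofList (prs.map (·.2.1)) = Γ i ∧
      Δ = padCtx i n Γ + (prs.map (fun p => shiftUp i p.1)).sum ∧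
      m + prs.length = a + (prs.map (·.2.2)).sum := by
  intro t
  induction t with
  | var k =>
    intro i n u Δ τ m h
    simp only [Tm.subst, gmap] at h
    rcases lt_trichotomy k i with hk | rfl | hk
    · rw [if_pos hk] at h
      cases h with
      | ax =>
        refine ⟨Ctx.single k {τ}, [], 1, DerU.ax k τ, by simp, ?_, ?_, by simp⟩
        · have : ¬ (i = k) := by omega
          simp [Ctx.single, this]
        · simp [padCtx_single_lt n τ hk]
    · rw [if_neg (lt_irrefl k), if_pos rfl] at h
      obtain ⟨hu, hv⟩ := antiRename u (addRight_inj k) h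
      refine ⟨Ctx.single k {τ}, [((fun j => Δ (j + k)), τ, m)], 1, DerU.ax k τ,
        ?_, by simp [Ctx.single], ?_, by simp [Nat.add_comm]⟩
      · intro p hp
        rw [List.mem_singleton] at hp
        subst hp
        exact hu
      · rw [padCtx_single_eq]
        simp only [List.map_cons, List.map_nil, List.sum_cons, List.sum_nil, add_zero,
          zero_add]
        exact (shiftUp_recomp (fun j hj => hv j (fun k' => by omega))).symm
    · rw [if_neg (by omega), if_neg (by omega)] at h
      cases h with
      | ax =>
        refine ⟨Ctx.single k {τ}, [], 1, DerU.ax k τ, by simp, ?_, ?_, by simp⟩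
        · have : ¬ (i = k) := by omega
          simp [Ctx.single, this]
        · simp [padCtx_single_gt n τ hk]
  | app t₁ t₂ ih1 ih2 =>
    intro i n u Δ τ m h
    simp only [Tm.subst] at h
    cases h with
    | app h1 h2 =>
      obtain ⟨G₁, prs₁, a₁, d1, m1, o1, e1, s1⟩ := ih1 h1
      obtain ⟨G₂, prs₂, a₂, d2, m2, o2, e2, s2⟩ := ih2 h2
      refine ⟨G₁ + G₂, prs₁ ++ prs₂, a₁ + a₂ + 1, DerU.app d1 d2, ?_, ?_, ?_, ?_⟩
      · intro p hp
        rcases List.mem_append.mp hp with hp | hp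
        exacts [m1 p hp, m2 p hp]
      · simp only [List.map_append, Pi.add_apply]
        rw [← o1, ← o2]
        rfl
      · rw [e1, e2, List.map_append, List.sum_append, padCtx_add]
        abel
      · simp only [List.length_append, List.map_append, List.sum_append]
        omega
  | lam t₁ ih =>
    intro i n u Δ τ m h
    simp only [Tm.subst] at h
    rw [Tm.subst_ext t₁ (liftS_gmap i n u)] at h
    cases h with
    | abs M hd hM =>
      obtain ⟨G, prs, a, d1, m1, o1, e1, s1⟩ := ih hd
      have hG0 : Multiset.ofList M = G 0 := by
        rw [hM, e1]
        simp only [Pi.add_apply, padCtx_apply_zero _ _ _ (Nat.succ_pos i),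
          sum_shiftUp_succ_zero, add_zero]
      refine ⟨Ctx.tail G, prs, a + 1, DerU.abs M d1 hG0, m1, ?_, ?_, by omega⟩
      · rw [o1]; rfl
      · rw [e1, tail_add, tail_padCtx, tail_sum_shiftUp]
  | bang t₁ ih =>
    intro i n u Δ τ m h
    simp only [Tm.subst] at h
    cases h with
    | bg prs0 hall =>
      have aux : ∀ (l : List (Ctx × Ty × ℕ)),
          (∀ p ∈ l, DerU p.1 (Tm.subst (gmap i n u) t₁) p.2.1 p.2.2) →
          ∃ (qrs prs : List (Ctx × Ty × ℕ)),
            qrs.map (·.2.1) = l.map (·.2.1) ∧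
            (∀ q ∈ qrs, DerU q.1 t₁ q.2.1 q.2.2) ∧
            (∀ p ∈ prs, DerU p.1 u p.2.1 p.2.2) ∧
            Multiset.ofList (prs.map (·.2.1)) = (qrs.map (·.1)).sum i ∧
            (l.map (·.1)).sum = padCtx i n ((qrs.map (·.1)).sum) +
              (prs.map (fun p => shiftUp i p.1)).sum ∧
            (l.map (·.2.2)).sum + prs.length
              = (qrs.map (·.2.2)).sum + (prs.map (·.2.2)).sum := by
        intro l
        induction l with
        | nil =>
          exact fun _ => ⟨[], [], rfl, by simp, by simp, by simp, by
            simp [padCtx_zero], by simp⟩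
        | cons p l ihl =>
          intro hall'
          obtain ⟨G, prsp, a, d1, m1, o1, e1, s1⟩ := ih (hall' p List.mem_cons_self)
          obtain ⟨qrs, prs, hq1, hq2, hq3, hq4, hq5, hq6⟩ :=
            ihl (fun q hq => hall' q (List.mem_cons_of_mem p hq))
          refine ⟨(G, p.2.1, a) :: qrs, prsp ++ prs, ?_, ?_, ?_, ?_, ?_, ?_⟩
          · simp [hq1]
          · intro q hq
            rcases List.mem_cons.mp hq with rfl | hq
            exacts [d1, hq2 q hq]
          · intro q hq
            rcases List.mem_append.mp hq with hq | hq
            exacts [m1 q hq, hq3 q hq]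
          · simp only [List.map_append, List.map_cons, List.sum_cons, Pi.add_apply]
            rw [← o1, ← hq4]
            rfl
          · simp only [List.map_cons, List.sum_cons, List.map_append, List.sum_append,
              padCtx_add]
            rw [e1, hq5]
            abel
          · simp only [List.map_cons, List.sum_cons, List.length_append,
              List.map_append, List.sum_append]
            omega
      obtain ⟨qrs, prs, hq1, hq2, hq3, hq4, hq5, hq6⟩ := aux prs0 hall
      refine ⟨(qrs.map (·.1)).sum, prs, (qrs.map (·.2.2)).sum, ?_, hq3, hq4, hq5, hq6⟩
      have := DerU.bg qrs hq2
      rwa [hq1] at this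
  | der t₁ ih =>
    intro i n u Δ τ m h
    simp only [Tm.subst] at h
    cases h with
    | dr hd =>
      obtain ⟨G, prs, a, d1, m1, o1, e1, s1⟩ := ih hd
      exact ⟨G, prs, a + 1, DerU.dr d1, m1, o1, e1, by omega⟩
  | esub t₁ t₂ ih1 ih2 =>
    intro i n u Δ τ m h
    simp only [Tm.subst] at h
    rw [Tm.subst_ext t₁ (liftS_gmap i n u)] at h
    cases h with
    | @es _ _ _ _ _ M' _ _ h1 h2 hM =>
      obtain ⟨G₁, prs₁, a₁, d1, m1, o1, e1, s1⟩ := ih1 h1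
      obtain ⟨G₂, prs₂, a₂, d2, m2, o2, e2, s2⟩ := ih2 h2
      have hG0 : Multiset.ofList M' = G₁ 0 := by
        rw [hM, e1]
        simp only [Pi.add_apply, padCtx_apply_zero _ _ _ (Nat.succ_pos i),
          sum_shiftUp_succ_zero, add_zero]
      refine ⟨Ctx.tail G₁ + G₂, prs₁ ++ prs₂, a₁ + a₂ + 1, DerU.es d1 d2 hG0,
        ?_, ?_, ?_, ?_⟩
      · intro p hp
        rcases List.mem_append.mp hp with hp | hp
        exacts [m1 p hp, m2 p hp]
      · simp only [List.map_append, Pi.add_apply]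
        show _ = G₁ (i+1) + G₂ i
        rw [← o1, ← o2]
        rfl
      · rw [e1, e2, tail_add, tail_padCtx, tail_sum_shiftUp, List.map_append,
          List.sum_append, padCtx_add]
        abel
      · simp only [List.length_append, List.map_append, List.sum_append]
        omega

end AntiSubst
section KeyLemmas

/-- key lemma for expansion of an `s!` step -/
theorem sKey (L : List Tm) : ∀ (n : ℕ) {Δ : Ctx} {t u : Tm} {τ : Ty} {m : ℕ},
    DerU Δ (Tm.plug L (Tm.substIn (L.length + n) u t)) τ m →
    ∃ (Γ Θ : Ctx) (M : List Ty) (a k : ℕ),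
      DerU Γ t τ a ∧ DerU Θ (Tm.plug L (Tm.bang u)) (Ty.mult M) k ∧
      Multiset.ofList M = Γ 0 ∧ Δ = padCtx 0 n Γ + Θ ∧ m + M.length = a + k := by
  induction L with
  | nil =>
    intro n Δ t u τ m h
    simp only [Tm.plug, List.length_nil, Nat.zero_add] at h
    rw [substIn_gmap] at h
    obtain ⟨Γ, prs, a, d1, m1, o1, e1, s1⟩ := antiSubst t h
    refine ⟨Γ, (prs.map (·.1)).sum, prs.map (·.2.1), a, (prs.map (·.2.2)).sum,
      d1, DerU.bg prs m1, o1, ?_, by simpa using s1⟩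
    rw [e1]
    congr 1
  | cons e L' ih =>
    intro n Δ t u τ m h
    simp only [Tm.plug, List.length_cons] at h
    have hlen : L'.length + 1 + n = L'.length + (n + 1) := by omega
    rw [hlen] at h
    cases h with
    | @es Γ₁ Δ₂ _ _ _ M₀ n₁ n₂ h1 h2 hM0 =>
      obtain ⟨G, Θ', M, a, k', d1, d2, o1, e1, s1⟩ := ih (n+1) h1
      have hΘ0 : Multiset.ofList M₀ = Θ' 0 := by
        rw [hM0, e1]
        simp only [Pi.add_apply, padCtx0_apply_zero _ _ (Nat.succ_pos n), zero_add]
      refine ⟨G, Ctx.tail Θ' + Δ₂, M, a, k' + n₂ + 1, d1,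
        DerU.es d2 h2 hΘ0, o1, ?_, by omega⟩
      rw [e1, tail_add, tail_padCtx0]
      abel

/-- key lemma for expansion of a `dB` step -/
theorem dBKey (L : List Tm) : ∀ (n : ℕ) {Δ : Ctx} {t u : Tm} {τ : Ty} {m : ℕ},
    DerU Δ (Tm.plug L (Tm.esub t (Tm.rename (· + (L.length + n)) u))) τ m →
    ∃ (Γ Θ : Ctx) (M : List Ty) (a k : ℕ),
      DerU Γ (Tm.plug L (Tm.lam t)) (Ty.arr M τ) a ∧ DerU Θ u (Ty.mult M) k ∧
      Δ = Γ + shiftUp n Θ ∧ m = a + k := by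
  induction L with
  | nil =>
    intro n Δ t u τ m h
    simp only [Tm.plug, List.length_nil, Nat.zero_add] at h
    cases h with
    | @es Γ₁ Δ₂ _ _ _ M n₁ n₂ h1 h2 hM =>
      obtain ⟨hu, hv⟩ := antiRename u (addRight_inj n) h2
      refine ⟨Ctx.tail Γ₁, fun j => Δ₂ (j + n), M, n₁ + 1, n₂,
        DerU.abs M h1 hM, hu, ?_, by omega⟩
      congr 1
      exact (shiftUp_recomp (fun j hj => hv j (fun k' => by omega))).symm
  | cons e L' ih =>
    intro n Δ t u τ m h
    simp only [Tm.plug, List.length_cons] at h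
    have hlen : L'.length + 1 + n = L'.length + (n + 1) := by omega
    rw [hlen] at h
    cases h with
    | @es Γ₁ Δ₂ _ _ _ M₀ n₁ n₂ h1 h2 hM0 =>
      obtain ⟨G, Θ, M, a, k, d1, d2, e1, s1⟩ := ih (n+1) h1
      have hG0 : Multiset.ofList M₀ = G 0 := by
        rw [hM0, e1]
        simp only [Pi.add_apply, shiftUp_succ_zero, add_zero]
      refine ⟨Ctx.tail G + Δ₂, Θ, M, a + n₂ + 1, k,
        DerU.es d1 h2 hG0, d2, ?_, by omega⟩
      rw [e1, tail_add, tail_shiftUp]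
      abel

/-- key lemma for expansion of a `d!` step -/
theorem dbKey (L : List Tm) : ∀ {Δ : Ctx} {t : Tm} {τ : Ty} {m : ℕ},
    DerU Δ (Tm.plug L t) τ m → DerU Δ (Tm.plug L (Tm.bang t)) (Ty.mult [τ]) m := by
  induction L with
  | nil =>
    intro Δ t τ m h
    have hb := DerU.bg (t := t) [(Δ, τ, m)] (by
      intro p hp
      rw [List.mem_singleton] at hp
      subst hp
      exact h)
    simpa [Tm.plug] using hb
  | cons e L' ih =>
    intro Δ t τ m h
    simp only [Tm.plug] at h ⊢
    cases h with
    | @es Γ₁ Δ₂ _ _ _ M₀ n₁ n₂ h1 h2 hM0 =>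
      exact DerU.es (ih h1) h2 hM0

end KeyLemmas
/-- **Weighted subject expansion for system 𝒰** (Lemma 9): if `Γ ⊢ t' : τ`
has a derivation of size `n'` and `t →w t'`, then `Γ ⊢ t : τ` has a
derivation of size `n > n'`. -/
theorem weighted_subject_expansion {Γ : Ctx} {t t' : Tm} {τ : Ty} {n' : ℕ}
    (h : DerU Γ t' τ n') (hs : StepW t t') :
    ∃ n : ℕ, DerU Γ t τ n ∧ n > n' := by
  obtain ⟨r, st⟩ := hs
  revert h
  induction st generalizing Γ τ n' with
  | root hr =>
    intro h
    cases hr with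
    | dB L t u =>
      obtain ⟨G, Θ, M, a, k, d1, d2, e1, s1⟩ := dBKey L 0 h
      refine ⟨a + k + 1, ?_, by omega⟩
      rw [e1, shiftUp_zero]
      exact DerU.app d1 d2
    | sb L t u =>
      obtain ⟨G, Θ, M, a, k, d1, d2, o1, e1, s1⟩ := sKey L 0 h
      refine ⟨a + k + 1, ?_, by omega⟩
      rw [e1, padCtx_zero_zero]
      exact DerU.es d1 d2 o1
    | db L t =>
      exact ⟨n' + 1, DerU.dr (dbKey L h), by omega⟩
  | appL u st ih =>
    intro h
    cases h with
    | app h1 h2 =>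
      obtain ⟨n, hn, hgt⟩ := ih h1
      exact ⟨_, DerU.app hn h2, by omega⟩
  | appR t st ih =>
    intro h
    cases h with
    | app h1 h2 =>
      obtain ⟨n, hn, hgt⟩ := ih h2
      exact ⟨_, DerU.app h1 hn, by omega⟩
  | lam st ih =>
    intro h
    cases h with
    | abs M hd hM =>
      obtain ⟨n, hn, hgt⟩ := ih hd
      exact ⟨n + 1, DerU.abs M hn hM, by omega⟩
  | der st ih =>
    intro h
    cases h with
    | dr hd =>
      obtain ⟨n, hn, hgt⟩ := ih hd
      exact ⟨n + 1, DerU.dr hn, by omega⟩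
  | esubL u st ih =>
    intro h
    cases h with
    | es h1 h2 hM =>
      obtain ⟨n, hn, hgt⟩ := ih h1
      exact ⟨_, DerU.es hn h2 hM, by omega⟩
  | esubR t st ih =>
    intro h
    cases h with
    | es h1 h2 hM =>
      obtain ⟨n, hn, hgt⟩ := ih h2
      exact ⟨_, DerU.es h1 hn hM, by omega⟩
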